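/- If every factor of length m of a word v is periodic (smallest period at most m/2), then all these factors have the same smallest period d, and d is a period of the whole word v. -/

import Mathlib

/-- `p` is a period of `w`: `p ≥ 1` and `w[i] = w[i+p]` for all valid indices. -/
def IsPeriod {α : Type*} (w : List α) (p : ℕ) : Prop :=
  1 ≤ p ∧ ∀ i, i + p < w.length → w[i]? = w[i + p]?

/-- The smallest period of `w`. -/
noncomputable def minPeriod {α : Type*} (w : List α) : ℕ :=
  sInf {p | IsPeriod w p}

/-- `w` is periodic if its smallest period is at most `|w|/2`. -/
def Periodic {α : Type*} (w : List α) : Prop :=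
  2 * minPeriod w ≤ w.length

/-- `w` is aperiodic if its smallest period exceeds `|w|/2`. -/
def Aperiodic {α : Type*} (w : List α) : Prop :=
  w.length < 2 * minPeriod w

/-- Cyclic rotation of `w` by `i`. -/
def rot {α : Type*} (w : List α) (i : ℕ) : List α :=
  w.drop i ++ w.take i

/-- A square is a nonempty word of the form `u ++ u`. -/
def IsSq {α : Type*} (s : List α) : Prop :=
  ∃ u : List α, u ≠ [] ∧ s = u ++ u

/-- `p`-fold concatenation of the word `y`. -/
def listPow {α : Type*} (y : List α) (p : ℕ) : List α :=
  (List.replicate p y).flatten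

/-- A word is primitive if it is not a `p`-th power with `p ≥ 2`. -/
def Primitive {α : Type*} (w : List α) : Prop :=
  ¬ ∃ (y : List α) (p : ℕ), 2 ≤ p ∧ w = listPow y p

/-- The set of distinct squares occurring in the circular word `(w)`. -/
def cyclicSquares {α : Type*} (w : List α) : Set (List α) :=
  {s | IsSq s ∧ ∃ i < w.length, s <:+: rot w i}

/-- `s` occurs in `x` starting at (0-indexed) position `i`. -/
def occursAt {α : Type*} (s x : List α) (i : ℕ) : Prop :=
  (x.drop i).take s.length = s

/-- The rightmost occurrence of `s` in `x` starts at (0-indexed) position `i`. -/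
def rightmostStartsAt {α : Type*} (s x : List α) (i : ℕ) : Prop :=
  occursAt s x i ∧ ∀ j, occursAt s x j → j ≤ i

/-- `w[i..j]` with 1-indexed inclusive bounds. -/
def oneSlice {α : Type*} (w : List α) (i j : ℕ) : List α :=
  (w.drop (i - 1)).take (j - i + 1)

/-- The letters `a` and `b` of the two-letter alphabet. -/
def la : Bool := false
def lb : Bool := true

/-- The word `(ba)^m`. -/
def baPow (m : ℕ) : List Bool := (List.replicate m [lb, la]).flatten

/-- The word `(ab)^m`. -/
def abPow (m : ℕ) : List Bool := (List.replicate m [la, lb]).flatten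

/-- `x_k = a (ba)^{k+1} a (ba)^{k+2}`. -/
def xWord (k : ℕ) : List Bool := [la] ++ baPow (k + 1) ++ [la] ++ baPow (k + 2)

/-- `f_k = a(ba)^{k+1} a(ba)^{k+2} a(ba)^{k+1} a(ba)^{k+2}`. -/
def fWord (k : ℕ) : List Bool := xWord k ++ xWord k

section Aux

variable {α : Type*}

lemma minPeriod_isPeriod {w : List α} {p : ℕ} (h : IsPeriod w p) :
    IsPeriod w (minPeriod w) := by
  have : {q | IsPeriod w q}.Nonempty := ⟨p, h⟩
  exact Nat.sInf_mem this

lemma minPeriod_le {w : List α} {p : ℕ} (h : IsPeriod w p) : minPeriod w ≤ p :=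
  Nat.sInf_le h

lemma isPeriod_length {w : List α} (hw : 1 ≤ w.length) : IsPeriod w w.length :=
  ⟨hw, fun i hi => absurd hi (by omega)⟩

lemma isPeriod_iterate {w : List α} {g : ℕ} (h : IsPeriod w g) :
    ∀ (k i : ℕ), i + g * k < w.length → w[i]? = w[i + g * k]? := by
  intro k
  induction k with
  | zero => intro i _; simp
  | succ k ih =>
    intro i hi
    have h1 : i + g < w.length := by nlinarith [Nat.mul_succ g k]
    have h2 := h.2 i h1
    have h3 := ih (i + g) (by nlinarith [Nat.mul_succ g k])
    rw [h2, h3]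
    congr 1
    nlinarith [Nat.mul_succ g k]

lemma isPeriod_sub {w : List α} {p q : ℕ} (hp : IsPeriod w p) (hq : IsPeriod w q)
    (hlt : q < p) (hlen : p + q ≤ w.length) : IsPeriod w (p - q) := by
  refine ⟨by omega, fun i hi => ?_⟩
  by_cases hcase : i + p < w.length
  · have h1 := hp.2 i hcase
    have h2 := hq.2 (i + (p - q)) (by omega)
    rw [h1, h2]
    congr 1
    omega
  · have hiq : q ≤ i := by omega
    have h1 := hq.2 (i - q) (by omega)
    have h2 := hp.2 (i - q) (by omega)
    have e1 : i - q + q = i := by omega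
    have e2 : i - q + p = i + (p - q) := by omega
    rw [e1] at h1
    rw [e2] at h2
    rw [← h1, h2]

lemma isPeriod_gcd {w : List α} (n : ℕ) :
    ∀ p q, p + q ≤ n → IsPeriod w p → IsPeriod w q → p + q ≤ w.length →
      IsPeriod w (Nat.gcd p q) := by
  induction n with
  | zero => intro p q hn hp _ _; exact absurd hp.1 (by omega)
  | succ n ih =>
    intro p q hn hp hq hlen
    have hp1 := hp.1
    have hq1 := hq.1
    rcases lt_trichotomy p q with hlt | heq | hlt
    · have hsub := isPeriod_sub hq hp hlt (by omega)
      have := ih (q - p) p (by omega) hsub hp (by omega)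
      rwa [Nat.gcd_sub_self_left (le_of_lt hlt), Nat.gcd_comm] at this
    · rw [heq, Nat.gcd_self]; exact hq
    · have hsub := isPeriod_sub hp hq hlt (by omega)
      have := ih (p - q) q (by omega) hsub hq (by omega)
      rwa [Nat.gcd_sub_self_left (le_of_lt hlt)] at this

lemma ext_cons {a : α} {t : List α} {p g : ℕ} (hp : IsPeriod (a :: t) p)
    (hg : IsPeriod t g) (hdvd : g ∣ p) (hlt : p < (a :: t).length) :
    IsPeriod (a :: t) g := by
  refine ⟨hg.1, fun i hi => ?_⟩
  cases i with
  | succ j =>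
    have : j + 1 + g = (j + g) + 1 := by omega
    rw [this, List.getElem?_cons_succ, List.getElem?_cons_succ]
    exact hg.2 j (by simp at hi ⊢; omega)
  | zero =>
    obtain ⟨k, hk⟩ := hdvd
    have hg1 : 1 ≤ g := hg.1
    have hp1 : 1 ≤ p := hp.1
    cases k with
    | zero => omega
    | succ k' =>
      have hpk : p = g * k' + g := by rw [hk, Nat.mul_succ]
      have h0 := hp.2 0 (by simpa using hlt)
      have e0 : (0 : ℕ) + p = (p - 1) + 1 := by omega
      rw [e0, List.getElem?_cons_succ] at h0
      have e1 : (0 : ℕ) + g = (g - 1) + 1 := by omega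
      rw [e1, List.getElem?_cons_succ]
      have hit := isPeriod_iterate hg k' (g - 1)
        (by simp at hlt; omega)
      have e2 : g - 1 + g * k' = p - 1 := by omega
      rw [e2] at hit
      rw [h0, hit]

lemma ext_concat {b : α} {t : List α} {q g : ℕ} (hq : IsPeriod (t ++ [b]) q)
    (hg : IsPeriod t g) (hdvd : g ∣ q) (hlt : q < (t ++ [b]).length) :
    IsPeriod (t ++ [b]) g := by
  have hlen : (t ++ [b]).length = t.length + 1 := by simp
  refine ⟨hg.1, fun i hi => ?_⟩
  have hg1 : 1 ≤ g := hg.1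
  have hq1 : 1 ≤ q := hq.1
  by_cases hcase : i + g < t.length
  · rw [List.getElem?_append_left (by omega), List.getElem?_append_left hcase]
    exact hg.2 i hcase
  · -- i + g = t.length
    have hig : i + g = t.length := by omega
    obtain ⟨k, hk⟩ := hdvd
    cases k with
    | zero => omega
    | succ k' =>
      have hqk : q = g * k' + g := by rw [hk, Nat.mul_succ]
      have hqle : q ≤ t.length := by omega
      have h1 := hq.2 (t.length - q) (by omega)
      have e1 : t.length - q + q = t.length := by omega
      rw [e1] at h1
      have hit := isPeriod_iterate hg k' (t.length - q) (by omega)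
      have e2 : t.length - q + g * k' = i := by omega
      rw [e2] at hit
      rw [List.getElem?_append_left (by omega), hig,
        ← h1, List.getElem?_append_left (by omega), ← hit]

/-- The key sliding step. -/
lemma slide_step {a b : α} {t : List α} (ht : 1 ≤ t.length)
    (h1 : Periodic (a :: t)) (h2 : Periodic (t ++ [b])) :
    minPeriod (a :: t) = minPeriod (t ++ [b]) := by
  have hlen1 : (a :: t).length = t.length + 1 := by simp
  have hlen2 : (t ++ [b]).length = t.length + 1 := by simp
  have hp : IsPeriod (a :: t) (minPeriod (a :: t)) :=
    minPeriod_isPeriod (isPeriod_length (by omega))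
  have hq : IsPeriod (t ++ [b]) (minPeriod (t ++ [b])) :=
    minPeriod_isPeriod (isPeriod_length (by rw [hlen2]; omega))
  set p := minPeriod (a :: t) with hpdef
  set q := minPeriod (t ++ [b]) with hqdef
  have hp1 : 1 ≤ p := hp.1
  have hq1 : 1 ≤ q := hq.1
  unfold Periodic at h1 h2
  rw [← hpdef] at h1; rw [← hqdef] at h2
  rw [hlen1] at h1; rw [hlen2] at h2
  by_cases hpq : p = q
  · exact hpq
  exfalso
  have hsum : p + q ≤ t.length := by omega
  -- restrictions to t
  have hpt : IsPeriod t p := by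
    refine ⟨hp1, fun i hi => ?_⟩
    have := hp.2 (i + 1) (by omega)
    have e : i + 1 + p = (i + p) + 1 := by omega
    rwa [e, List.getElem?_cons_succ, List.getElem?_cons_succ] at this
  have hqt : IsPeriod t q := by
    refine ⟨hq1, fun i hi => ?_⟩
    have := hq.2 i (by omega)
    rwa [List.getElem?_append_left (by omega), List.getElem?_append_left (by omega)] at this
  have hg : IsPeriod t (Nat.gcd p q) :=
    isPeriod_gcd (p + q) p q le_rfl hpt hqt hsum
  have hgp : Nat.gcd p q ∣ p := Nat.gcd_dvd_left p q
  have hgq : Nat.gcd p q ∣ q := Nat.gcd_dvd_right p q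
  have h3 : IsPeriod (a :: t) (Nat.gcd p q) :=
    ext_cons hp hg hgp (by omega)
  have h4 : IsPeriod (t ++ [b]) (Nat.gcd p q) :=
    ext_concat hq hg hgq (by omega)
  have h5 : p ≤ Nat.gcd p q := minPeriod_le h3
  have h6 : q ≤ Nat.gcd p q := minPeriod_le h4
  have h7 : Nat.gcd p q ≤ p := Nat.le_of_dvd (by omega) hgp
  have h8 : Nat.gcd p q ≤ q := Nat.le_of_dvd (by omega) hgq
  omega

end Aux

/-- If every factor of length `m` of `v` is periodic, then all these factors share the
same smallest period `d`, and `d` is a period of `v`. -/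
theorem stmt12 {α : Type*} (v : List α) (m : ℕ) (hm : 2 ≤ m) (hv : m ≤ v.length)
    (h : ∀ s : List α, s <:+: v → s.length = m → Periodic s) :
    ∃ d : ℕ, (∀ s : List α, s <:+: v → s.length = m → minPeriod s = d) ∧
      IsPeriod v d := by
  set n := v.length with hn
  set W : ℕ → List α := fun i => (v.drop i).take m with hW
  have hWlen : ∀ i, i + m ≤ n → (W i).length = m := by
    intro i hi
    simp only [hW, List.length_take, List.length_drop]
    omega
  have hWinf : ∀ i, W i <:+: v := by
    intro i
    exact ((v.drop i).take_prefix m).isInfix.trans (v.drop_suffix i).isInfix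
  have hWget : ∀ i k, k < m → (W i)[k]? = v[i + k]? := by
    intro i k hk
    simp only [hW]
    rw [List.getElem?_take_of_lt hk, List.getElem?_drop]
  -- key periodicity of each window
  have hWper : ∀ i, i + m ≤ n → Periodic (W i) :=
    fun i hi => h (W i) (hWinf i) (hWlen i hi)
  -- sliding step
  have hstep : ∀ i, i + 1 + m ≤ n → minPeriod (W i) = minPeriod (W (i + 1)) := by
    intro i hi
    set t : List α := (v.drop (i + 1)).take (m - 1) with htdef
    have htlen : t.length = m - 1 := by
      simp only [htdef, List.length_take, List.length_drop]
      omega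
    have hiv : i < v.length := by omega
    have hWi : W i = v[i] :: t := by
      simp only [hW]
      rw [List.drop_eq_getElem_cons hiv]
      have : m = (m - 1) + 1 := by omega
      rw [this, List.take_succ_cons]
    have hdroplen : m - 1 < (v.drop (i + 1)).length := by
      rw [List.length_drop]; omega
    have hWi1 : W (i + 1) = t ++ [(v.drop (i + 1))[m - 1]] := by
      simp only [hW]
      have e : m = (m - 1) + 1 := by omega
      conv_lhs => rw [e]
      rw [List.take_succ, List.getElem?_eq_getElem hdroplen]
      rfl
    rw [hWi, hWi1]
    exact slide_step (by omega) (hWi ▸ hWper i (by omega)) (hWi1 ▸ hWper (i + 1) (by omega))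
  -- all windows have equal min period
  have hall : ∀ i, i + m ≤ n → minPeriod (W i) = minPeriod (W 0) := by
    intro i
    induction i with
    | zero => intro _; rfl
    | succ i ih =>
      intro hi
      rw [← hstep i (by omega)]
      exact ih (by omega)
  set d := minPeriod (W 0) with hd
  have hW0 : IsPeriod (W 0) d :=
    minPeriod_isPeriod (isPeriod_length (by rw [hWlen 0 (by omega)]; omega))
  have hd1 : 1 ≤ d := hW0.1
  have hd2 : 2 * d ≤ m := by
    have := hWper 0 (by omega)
    unfold Periodic at this
    rwa [hWlen 0 (by omega)] at this
  -- any length-m factor is a window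
  have hfac : ∀ s : List α, s <:+: v → s.length = m → ∃ i, i + m ≤ n ∧ s = W i := by
    intro s hs hsl
    obtain ⟨x, y, hxy⟩ := hs
    refine ⟨x.length, ?_, ?_⟩
    · have := congrArg List.length hxy
      simp at this
      omega
    · simp only [hW]
      have hdrop : v.drop x.length = s ++ y := by
        rw [← hxy, List.append_assoc, List.drop_left]
      rw [hdrop, List.take_left' hsl]
  refine ⟨d, fun s hs hsl => ?_, ?_⟩
  · obtain ⟨i, hi, rfl⟩ := hfac s hs hsl
    exact hall i hi
  · refine ⟨hd1, fun j hj => ?_⟩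
    set i := min j (n - m) with hi
    have hile : i + m ≤ n := by omega
    have hij : i ≤ j := by omega
    have hjd : j - i + d < m := by omega
    have hper : IsPeriod (W i) d := by
      rw [← hall i hile]
      exact minPeriod_isPeriod (isPeriod_length (by rw [hWlen i hile]; omega))
    have h1 := hWget i (j - i) (by omega)
    have h2 := hWget i (j - i + d) hjd
    have h3 := hper.2 (j - i) (by rw [hWlen i hile]; omega)
    have e1 : i + (j - i) = j := by omega
    have e2 : i + (j - i + d) = j + d := by omega
    rw [e1] at h1
    rw [e2] at h2
    rw [← h1, h3, h2]
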